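/- Let (G_i,τ_i,∂_i), i ∈ I, be an at most countable family of Polish topometric groups, and let G = ∏ G_i with product topology τ and metric ∂((g_i),(h_i)) = sup_i ∂_i(g_i,h_i) (assuming the metrics are uniformly bounded). Then (G,τ,∂) has ample generics if and only if every (G_i,τ_i,∂_i) has ample generics. -/

import Mathlib

open Set TopologicalSpace

/-- Preimage of a dense set under a continuous map admitting pointwise continuous sections. -/
lemma dense_preimage_of_sections {X Y : Type*} [TopologicalSpace X] [TopologicalSpace Y]
    {f : X → Y} (hsec : ∀ x : X, ∃ ρ : Y → X, Continuous ρ ∧ (∀ y, f (ρ y) = y) ∧ ρ (f x) = x)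
    {A : Set Y} (hA : Dense A) : Dense (f ⁻¹' A) := by
  intro x
  obtain ⟨ρ, hρc, hρf, hρx⟩ := hsec x
  have h1 : ρ '' A ⊆ f ⁻¹' A := by
    rintro _ ⟨a, ha, rfl⟩
    simpa [hρf a] using ha
  have : x ∈ closure (ρ '' A) := by
    rw [← hρx]
    exact (image_closure_subset_closure_image hρc) ⟨f x, hA (f x), rfl⟩
  exact closure_mono h1 this

lemma residual_preimage_of_sections {X Y : Type*} [TopologicalSpace X] [TopologicalSpace Y]
    {f : X → Y} (hf : Continuous f)
    (hsec : ∀ x : X, ∃ ρ : Y → X, Continuous ρ ∧ (∀ y, f (ρ y) = y) ∧ ρ (f x) = x)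
    {s : Set Y} (hs : s ∈ residual Y) : f ⁻¹' s ∈ residual X := by
  obtain ⟨T, hTo, hTd, hTc, hTsub⟩ := mem_residual_iff.mp hs
  have : (⋂ t ∈ T, f ⁻¹' t) ∈ residual X := by
    refine (countable_bInter_mem hTc).mpr fun t ht => ?_
    exact residual_of_dense_open ((hTo t ht).preimage hf)
      (dense_preimage_of_sections hsec (hTd t ht))
  refine Filter.mem_of_superset this ?_
  intro x hx
  apply hTsub
  simp only [mem_iInter, mem_preimage] at hx ⊢
  exact fun t ht => hx t ht

/-- Easy half of Kuratowski–Ulam: a residual set in a product has a residual section. -/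
lemma exists_residual_section {Y Z : Type*} [TopologicalSpace Y] [TopologicalSpace Z]
    [SecondCountableTopology Y] [BaireSpace Z] [Nonempty Z]
    {S : Set (Y × Z)} (hS : S ∈ residual (Y × Z)) :
    ∃ z : Z, {y : Y | (y, z) ∈ S} ∈ residual Y := by
  obtain ⟨T, hTo, hTd, hTc, hTsub⟩ := mem_residual_iff.mp hS
  -- for each dense open U in the product, the set of z with dense section is residual
  have key : ∀ U ∈ T, {z : Z | Dense {y : Y | (y, z) ∈ U}} ∈ residual Z := by
    intro U hU
    set B := countableBasis Y with hB
    have hW : ∀ V ∈ B, {z : Z | ∃ y ∈ V, (y, z) ∈ U} ∈ residual Z := by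
      intro V hV
      refine residual_of_dense_open ?_ ?_
      · have : {z : Z | ∃ y ∈ V, (y, z) ∈ U} = ⋃ y ∈ V, {z : Z | (y, z) ∈ U} := by
          ext z; simp [mem_iUnion]
        rw [this]
        exact isOpen_biUnion fun y _ =>
          (hTo U hU).preimage (Continuous.prodMk_right y)
      · rw [dense_iff_inter_open]
        intro O hO hOne
        have hVne : V.Nonempty := nonempty_of_mem_countableBasis hV
        have hprod : ((V ×ˢ O) ∩ U).Nonempty :=
          (hTd U hU).inter_open_nonempty _
            (((isBasis_countableBasis Y).isOpen hV).prod hO) (hVne.prod hOne)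
        obtain ⟨⟨y, z⟩, hm, hyzU⟩ := hprod
        exact ⟨z, hm.2, ⟨y, hm.1, hyzU⟩⟩
    have hint : (⋂ V ∈ B, {z : Z | ∃ y ∈ V, (y, z) ∈ U}) ∈ residual Z :=
      (countable_bInter_mem (countable_countableBasis Y)).mpr hW
    refine Filter.mem_of_superset hint ?_
    intro z hz
    rw [mem_iInter₂] at hz
    rw [mem_setOf_eq, dense_iff_inter_open]
    intro O hO hOne
    obtain ⟨x, hxO⟩ := hOne
    obtain ⟨V, hVB, hxV, hVO⟩ :=
      (isBasis_countableBasis Y).exists_subset_of_mem_open hxO hO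
    obtain ⟨y, hyV, hyzU⟩ := hz V hVB
    exact ⟨y, hVO hyV, hyzU⟩
  have hR : (⋂ U ∈ T, {z : Z | Dense {y : Y | (y, z) ∈ U}}) ∈ residual Z :=
    (countable_bInter_mem hTc).mpr key
  obtain ⟨z, hz⟩ := (dense_of_mem_residual hR).nonempty
  rw [mem_iInter₂] at hz
  refine ⟨z, ?_⟩
  have : (⋂ U ∈ T, {y : Y | (y, z) ∈ U}) ∈ residual Y := by
    refine (countable_bInter_mem hTc).mpr fun U hU => ?_
    exact residual_of_dense_open ((hTo U hU).preimage (continuous_id.prodMk continuous_const)) (hz U hU)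
  refine Filter.mem_of_superset this ?_
  intro y hy
  apply hTsub
  rw [mem_iInter₂] at hy
  exact fun U hU => hy U hU
open Pointwise

/-- The open `ε`-enlargement of `A ⊆ G` with respect to the distance `D`. -/
def enclG {G : Type*} (D : G → G → ℝ) (ε : ℝ) (A : Set G) : Set G :=
  {g | ∃ b ∈ A, D g b < ε}

/-- `A` is σ-syndetic: countably many left translates of `A` cover `G`. -/
def SigmaSyndetic {G : Type*} [Group G] (A : Set G) : Prop :=
  ∃ t : ℕ → G, (⋃ n : ℕ, t n • A) = Set.univ

/-- The sup metric on tuples induced by `D`. -/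
noncomputable def supMetG {G : Type*} (D : G → G → ℝ) {n : ℕ} (x y : Fin n → G) : ℝ :=
  ⨆ i : Fin n, D (x i) (y i)

/-- `(G,τ,D)` is Steinhaus with exponent `k`: for every symmetric σ-syndetic `A` and
`ε > 0`, the identity lies in the interior of `(A^k)_ε`. -/
def SteinhausWith {G : Type*} [Group G] [TopologicalSpace G] (D : G → G → ℝ)
    (k : ℕ) : Prop :=
  ∀ A : Set G, A⁻¹ = A → SigmaSyndetic A →
    ∀ ε > (0 : ℝ), (1 : G) ∈ interior (enclG D ε (A ^ k))

/-- The topometric group `(G,τ,D)` has ample generics: for every `n` and `ε > 0` some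
tuple in `Gⁿ` has a diagonal conjugacy class whose `ε`-enlargement is comeagre. -/
def AmpleGenerics {G : Type*} [Group G] [TopologicalSpace G] (D : G → G → ℝ) : Prop :=
  ∀ n : ℕ, ∀ ε > (0 : ℝ), ∃ g : Fin n → G,
    {f : Fin n → G | ∃ k : G, supMetG D f (fun i => k * g i * k⁻¹) < ε}
      ∈ residual (Fin n → G)

/-- A countable product of Polish topometric groups, with the product
topology and the supremum metric (the factor metrics being uniformly bounded), has
ample generics iff every factor does. -/
theorem stmt_18 {ι : Type*} [Countable ι] {G : ι → Type*}
    [∀ i, Group (G i)] [∀ i, TopologicalSpace (G i)]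
    [∀ i, IsTopologicalGroup (G i)] [∀ i, PolishSpace (G i)]
    (D : ∀ i, G i → G i → ℝ)
    (hD_eq : ∀ i, ∀ g h : G i, D i g h = 0 ↔ g = h)
    (hD_symm : ∀ i, ∀ g h : G i, D i g h = D i h g)
    (hD_tri : ∀ i, ∀ g h k : G i, D i g k ≤ D i g h + D i h k)
    (hD_bi : ∀ i, ∀ g h k : G i,
      D i (k * g) (k * h) = D i g h ∧ D i (g * k) (h * k) = D i g h)
    (hD_ref : ∀ i, ∀ U : Set (G i), IsOpen U →
      ∀ g ∈ U, ∃ ε > (0 : ℝ), {h | D i g h < ε} ⊆ U)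
    (hD_lsc : ∀ i, ∀ r : ℝ, IsClosed {p : G i × G i | D i p.1 p.2 ≤ r})
    (hbdd : ∃ C : ℝ, ∀ i, ∀ g h : G i, D i g h ≤ C)
    (DP : (∀ i, G i) → (∀ i, G i) → ℝ)
    (hDP : ∀ g h : ∀ i, G i, DP g h = ⨆ i, D i (g i) (h i)) :
    AmpleGenerics DP ↔ ∀ i, AmpleGenerics (D i) := by
  classical
  obtain ⟨C, hC⟩ := hbdd
  have hDnn : ∀ i, ∀ g h : G i, 0 ≤ D i g h := by
    intro i g h
    have h1 := hD_tri i g g h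
    have h2 := (hD_eq i g g).mpr rfl
    have h3 := hD_symm i h g
    have h4 := hD_tri i g h g
    nlinarith [hD_symm i g h]
  constructor
  · -- product has ample generics → each factor does
    intro hA i₀ n ε hε
    obtain ⟨gbar, hS⟩ := hA n ε hε
    refine ⟨fun j => gbar j i₀, ?_⟩
    -- the merge map
    set φ : (Fin n → G i₀) × (Fin n → ∀ i, G i) → (Fin n → ∀ i, G i) :=
      fun p j => Function.update (p.2 j) i₀ (p.1 j) with hφ
    have hφc : Continuous φ :=
      continuous_pi fun j =>
        ((continuous_apply j).comp continuous_snd).update i₀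
          ((continuous_apply j).comp continuous_fst)
    have hsec : ∀ p, ∃ ρ : (Fin n → ∀ i, G i) → (Fin n → G i₀) × (Fin n → ∀ i, G i),
        Continuous ρ ∧ (∀ x, φ (ρ x) = x) ∧ ρ (φ p) = p := by
      intro p
      refine ⟨fun F => (fun j => F j i₀, fun j => Function.update (F j) i₀ (p.2 j i₀)),
        ?_, ?_, ?_⟩
      · refine Continuous.prodMk ?_ ?_
        · exact continuous_pi fun j => (continuous_apply i₀).comp (continuous_apply j)
        · exact continuous_pi fun j => (continuous_apply j).update i₀ continuous_const
      · intro x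
        funext j
        simp [hφ, Function.update_idem]
      · ext j
        · simp [hφ]
        · simp [hφ, Function.update_idem]
    have hpre : φ ⁻¹' {f | ∃ k : ∀ i, G i,
        supMetG DP f (fun j => k * gbar j * k⁻¹) < ε} ∈ residual _ :=
      residual_preimage_of_sections hφc hsec hS
    haveI : BaireSpace (Fin n → ∀ i, G i) := by
      letI := upgradeIsCompletelyMetrizable (Fin n → ∀ i, G i)
      infer_instance
    obtain ⟨z, hz⟩ := exists_residual_section hpre
    refine Filter.mem_of_superset hz ?_
    intro y hy
    obtain ⟨K, hK⟩ := hy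
    refine ⟨K i₀, ?_⟩
    have h0 : 0 ≤ supMetG DP (φ (y, z)) fun j => K * gbar j * K⁻¹ := by
      unfold supMetG
      refine Real.iSup_nonneg fun j => ?_
      rw [hDP]
      exact Real.iSup_nonneg fun i => hDnn i _ _
    refine lt_of_le_of_lt ?_ hK
    unfold supMetG
    refine Real.iSup_le (fun j => ?_) h0
    have e1 : y j = φ (y, z) j i₀ := by simp [hφ]
    have b0 : D i₀ (φ (y, z) j i₀) ((K * gbar j * K⁻¹) i₀)
        ≤ DP (φ (y, z) j) (K * gbar j * K⁻¹) := by
      rw [hDP]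
      refine le_ciSup (f := fun i => D i (φ (y, z) j i) ((K * gbar j * K⁻¹) i)) ⟨C, ?_⟩ i₀
      rintro _ ⟨i, rfl⟩
      exact hC i _ _
    have b2 : DP (φ (y, z) j) (K * gbar j * K⁻¹)
        ≤ ⨆ j' : Fin n, DP (φ (y, z) j') (K * gbar j' * K⁻¹) :=
      le_ciSup (f := fun j' : Fin n => DP (φ (y, z) j') (K * gbar j' * K⁻¹))
        (Set.Finite.bddAbove (Set.finite_range _)) j
    rw [e1]
    exact b0.trans b2
  · -- each factor has ample generics → the product does
    intro h n ε hε
    choose g hg using fun i => h i n (ε / 2) (by linarith)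
    refine ⟨fun j i => g i j, ?_⟩
    have key : ∀ i, (fun (F : Fin n → ∀ i', G i') (j : Fin n) => F j i) ⁻¹'
        {f : Fin n → G i | ∃ k : G i,
          supMetG (D i) f (fun j => k * g i j * k⁻¹) < ε / 2} ∈
        residual (Fin n → ∀ i', G i') := by
      intro i
      refine residual_preimage_of_sections ?_ ?_ (hg i)
      · exact continuous_pi fun j => (continuous_apply i).comp (continuous_apply j)
      · intro F
        refine ⟨fun y j => Function.update (F j) i (y j), ?_, ?_, ?_⟩
        · exact continuous_pi fun j =>
            Continuous.update continuous_const i (continuous_apply j)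
        · intro y; funext j; simp
        · funext j; simp
    have hint : (⋂ i, (fun (F : Fin n → ∀ i', G i') (j : Fin n) => F j i) ⁻¹'
        {f : Fin n → G i | ∃ k : G i,
          supMetG (D i) f (fun j => k * g i j * k⁻¹) < ε / 2}) ∈
        residual (Fin n → ∀ i', G i') := countable_iInter_mem.mpr key
    refine Filter.mem_of_superset hint ?_
    intro F hF
    rw [Set.mem_iInter] at hF
    choose k hk using fun i => hF i
    refine ⟨fun i => k i, ?_⟩
    have hhalf : (0 : ℝ) ≤ ε / 2 := by linarith
    refine lt_of_le_of_lt ?_ (half_lt_self hε)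
    unfold supMetG
    refine Real.iSup_le (fun j => ?_) hhalf
    rw [hDP]
    refine Real.iSup_le (fun i => ?_) hhalf
    have e2 : D i (F j i) (((fun i' => k i') * (fun i' => g i' j) * (fun i' => k i')⁻¹) i)
        = D i (F j i) (k i * g i j * (k i)⁻¹) := rfl
    rw [e2]
    have b1 : D i (F j i) (k i * g i j * (k i)⁻¹)
        ≤ ⨆ j' : Fin n, D i (F j' i) (k i * g i j' * (k i)⁻¹) :=
      le_ciSup (f := fun j' : Fin n => D i (F j' i) (k i * g i j' * (k i)⁻¹))
        (Set.Finite.bddAbove (Set.finite_range _)) j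
    refine b1.trans ?_
    exact le_of_lt (hk i)
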